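/- arXiv:1504.02526 — 3 statements merged into one kernel-verified Lean document; each statement's English description precedes it below -/
import Mathlib

section
/- Fix an integer K ≥ 1 and reals C > 0, λ > 0. Suppose that for every 1-Lipschitz function f : [0,1] → ℝ there exist reals c_0, …, c_K ∈ [−C, C] such that sup_{x ∈ [0,1]} |f(x) − Σ_{i=0}^K c_i B_{i,K}(x)| ≤ λ. Then for any two probability measures P, Q on [0,1], Tran(P, Q) ≤ C · Σ_{i=0}^K |fq_i(P) − fq_i(Q)| + 2λ. -/
open MeasureTheory ENNReal Set

/-- Transportation (Wasserstein-1) distance between two measures `P` and `Q` on `X`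
with respect to a cost/metric `d`, defined as the infimum over all couplings of the
expected cost. -/
noncomputable def tran {X : Type*} [MeasurableSpace X] (d : X → X → ℝ)
    (P Q : Measure X) : ℝ≥0∞ :=
  ⨅ (μ : Measure (X × X)) (_ : μ.map Prod.fst = P ∧ μ.map Prod.snd = Q),
    ∫⁻ p, ENNReal.ofReal (d p.1 p.2) ∂μ

/-- The Bernstein basis polynomial `B_{i,K}(x) = C(K,i) xⁱ (1-x)^{K-i}`. -/
noncomputable def bern (K i : ℕ) (x : ℝ) : ℝ :=
  (K.choose i : ℝ) * x ^ i * (1 - x) ^ (K - i)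

/-- `fq_i(θ) = ∫ B_{i,K}(x) dθ(x)`, the frequency vector of `θ`. -/
noncomputable def fq (K : ℕ) (θ : Measure ℝ) (i : ℕ) : ℝ :=
  ∫ x, bern K i x ∂θ

section STMT6AUX
open ProbabilityTheory Filter Topology


noncomputable def quant (P : Measure ℝ) (t : ℝ) : ℝ :=
  sInf {x | min t 1 ≤ cdf P x ∧ 0 ≤ x}

section quant
variable {P : Measure ℝ} [IsProbabilityMeasure P] (hP : P (Set.Icc (0:ℝ) 1)ᶜ = 0)
include hP
set_option linter.unusedSectionVars false

lemma cdf_eq_zero_of_neg {x : ℝ} (hx : x < 0) : cdf P x = 0 := by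
  rw [cdf_eq_real, measureReal_def]
  have : P (Iic x) = 0 := by
    refine measure_mono_null ?_ hP
    intro y hy
    simp only [mem_Iic] at hy
    simp only [mem_compl_iff, mem_Icc, not_and_or, not_le]
    left; linarith
  simp [this]

lemma cdf_one_eq : cdf P 1 = 1 := by
  rw [cdf_eq_real, measureReal_def]
  have h0 : P (Ioi (1:ℝ)) = 0 := by
    refine measure_mono_null ?_ hP
    intro y hy
    simp only [mem_Ioi] at hy
    simp only [mem_compl_iff, mem_Icc, not_and_or, not_le]
    right; linarith
  have : P (Iic 1) = 1 := by
    have := measure_add_measure_compl (μ := P) (s := Iic (1:ℝ)) measurableSet_Iic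
    rw [compl_Iic, h0, add_zero] at this
    simpa using this
  simp [this]

lemma quant_set_nonempty (t : ℝ) : {x | min t 1 ≤ cdf P x ∧ 0 ≤ x}.Nonempty := by
  refine ⟨1, ?_, by norm_num⟩
  rw [cdf_one_eq hP]
  exact min_le_right _ _

lemma quant_set_bddBelow (t : ℝ) : BddBelow {x | min t 1 ≤ cdf P x ∧ 0 ≤ x} :=
  ⟨0, fun x hx => hx.2⟩

lemma quant_mono : Monotone (quant P) := by
  intro a b hab
  refine csInf_le_csInf (quant_set_bddBelow hP a) ?_ ?_
  · exact ⟨1, by rw [cdf_one_eq hP]; exact min_le_right _ _, by norm_num⟩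
  · intro x hx
    exact ⟨le_trans (min_le_min hab le_rfl) hx.1, hx.2⟩

lemma quant_nonneg (t : ℝ) : 0 ≤ quant P t :=
  le_csInf (quant_set_nonempty hP t) (fun x hx => hx.2)

lemma quant_le_one (t : ℝ) : quant P t ≤ 1 :=
  csInf_le (quant_set_bddBelow hP t) ⟨by rw [cdf_one_eq hP]; exact min_le_right _ _, by norm_num⟩

lemma quant_gal {t : ℝ} (ht : t ∈ Ioo (0:ℝ) 1) (x : ℝ) :
    quant P t ≤ x ↔ t ≤ cdf P x := by
  have hmin : min t 1 = t := min_eq_left ht.2.le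
  have hsetq : {y | min t 1 ≤ cdf P y ∧ 0 ≤ y} = {y | t ≤ cdf P y} := by
    ext y
    simp only [mem_setOf_eq, hmin, and_iff_left_iff_imp]
    intro hy
    by_contra hneg
    push_neg at hneg
    rw [cdf_eq_zero_of_neg hP hneg] at hy
    linarith [ht.1]
  constructor
  · intro h
    have key : t ≤ cdf P (quant P t) := by
      have hbdd : BddBelow {y | t ≤ cdf P y} := by
        refine ⟨0, fun w hw => ?_⟩
        by_contra hneg
        push_neg at hneg
        rw [mem_setOf_eq, cdf_eq_zero_of_neg hP hneg] at hw
        linarith [ht.1]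
      have hne : {y | t ≤ cdf P y}.Nonempty :=
        ⟨1, by rw [mem_setOf_eq, cdf_one_eq hP]; exact ht.2.le⟩
      have hq : ∀ y, quant P t < y → t ≤ cdf P y := by
        intro y hy
        rw [quant, hsetq] at hy
        obtain ⟨z, hz, hzy⟩ := (csInf_lt_iff hbdd hne).mp hy
        exact le_trans hz ((cdf P).mono hzy.le)
      have hrc : ContinuousWithinAt (cdf P) (Ici (quant P t)) (quant P t) :=
        (cdf P).right_continuous _
      have hrc' : Tendsto (cdf P) (𝓝[>] (quant P t)) (𝓝 (cdf P (quant P t))) :=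
        hrc.tendsto.mono_left (nhdsWithin_mono _ Ioi_subset_Ici_self)
      exact ge_of_tendsto hrc' (eventually_nhdsWithin_of_forall (fun y hy => hq y hy))
    exact le_trans key ((cdf P).mono h)
  · intro h
    refine csInf_le (quant_set_bddBelow hP t) ?_
    rw [hsetq]
    exact h

lemma quant_measurable : Measurable (quant P) := (quant_mono hP).measurable

lemma map_quant : (volume.restrict (Ioo (0:ℝ) 1)).map (quant P) = P := by
  have hprob : IsProbabilityMeasure (volume.restrict (Ioo (0:ℝ) 1)) :=
    ⟨by simp [Real.volume_Ioo]⟩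
  have hmap : IsProbabilityMeasure ((volume.restrict (Ioo (0:ℝ) 1)).map (quant P)) :=
    Measure.isProbabilityMeasure_map (quant_measurable hP).aemeasurable
  refine Measure.ext_of_Iic _ _ (fun x => ?_)
  rw [Measure.map_apply (quant_measurable hP) measurableSet_Iic,
    Measure.restrict_apply (quant_measurable hP measurableSet_Iic)]
  have hset : quant P ⁻¹' Iic x ∩ Ioo 0 1 = Ioo 0 1 ∩ Iic (cdf P x) := by
    ext t
    simp only [mem_inter_iff, mem_preimage, mem_Iic, mem_Ioo]
    constructor
    · rintro ⟨h1, h2⟩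
      exact ⟨h2, (quant_gal hP h2 x).mp h1⟩
    · rintro ⟨h1, h2⟩
      exact ⟨(quant_gal hP h1 x).mpr h2, h1⟩
  rw [hset, ← ofReal_cdf P x]
  have h0 : 0 ≤ cdf P x := cdf_nonneg P x
  have h1 : cdf P x ≤ 1 := cdf_le_one P x
  rcases eq_or_lt_of_le h1 with h | h
  · have : Ioo (0:ℝ) 1 ∩ Iic (cdf P x) = Ioo 0 1 := by
      apply inter_eq_left.mpr
      intro t ht; exact le_trans ht.2.le (by rw [h])
    rw [this, Real.volume_Ioo, h]
    norm_num
  · have : Ioo (0:ℝ) 1 ∩ Iic (cdf P x) = Ioc 0 (cdf P x) := by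
      ext t
      simp only [mem_inter_iff, mem_Ioo, mem_Iic, mem_Ioc]
      constructor
      · rintro ⟨⟨a, b⟩, c⟩; exact ⟨a, c⟩
      · rintro ⟨a, b⟩; exact ⟨⟨a, lt_of_le_of_lt b h⟩, b⟩
    rw [this, Real.volume_Ioc, sub_zero]

end quant

lemma cost_bound (P Q : Measure ℝ) [IsProbabilityMeasure P] [IsProbabilityMeasure Q]
    (hP : P (Set.Icc (0:ℝ) 1)ᶜ = 0) (hQ : Q (Set.Icc (0:ℝ) 1)ᶜ = 0) :
    ∫⁻ t in Ioo (0:ℝ) 1, ENNReal.ofReal |quant P t - quant Q t|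
      ≤ ∫⁻ x in Ioo (0:ℝ) 1, ENNReal.ofReal |cdf P x - cdf Q x| := by
  set gP := quant P
  set gQ := quant Q
  set m : ℝ → ℝ := fun t => min (gP t) (gQ t) with hm
  set M : ℝ → ℝ := fun t => max (gP t) (gQ t) with hM
  have hmM : Measurable m := ((quant_measurable hP)).min ((quant_measurable hQ))
  have hMM : Measurable M := ((quant_measurable hP)).max ((quant_measurable hQ))
  set B : Set (ℝ × ℝ) := {p | m p.1 ≤ p.2 ∧ p.2 < M p.1} with hB
  have hBmeas : MeasurableSet B := by
    refine MeasurableSet.inter ?_ ?_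
    · exact measurableSet_le (hmM.comp measurable_fst) measurable_snd
    · exact measurableSet_lt measurable_snd (hMM.comp measurable_fst)
  -- pointwise identity in t
  have step1 : ∀ t : ℝ, ENNReal.ofReal |gP t - gQ t|
      = volume (Ico (m t) (M t) ∩ Ioo (0:ℝ) 1) := by
    intro t
    have h1 : volume (Ico (m t) (M t) \ Ioo (0:ℝ) 1) = 0 := by
      refine measure_mono_null (fun x hx => ?_) (Real.volume_singleton (a := (0:ℝ)))
      obtain ⟨⟨hx1, hx2⟩, hx3⟩ := hx
      simp only [mem_Ioo, not_and_or, not_lt] at hx3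
      have h0m : 0 ≤ m t := le_min (quant_nonneg hP t) (quant_nonneg hQ t)
      have h1M : M t ≤ 1 := max_le (quant_le_one hP t) (quant_le_one hQ t)
      rcases hx3 with h | h
      · have : x = 0 := le_antisymm h (le_trans h0m hx1)
        simp [this]
      · linarith
    have h2 : volume (Ico (m t) (M t) ∩ Ioo (0:ℝ) 1) + volume (Ico (m t) (M t) \ Ioo (0:ℝ) 1)
        = volume (Ico (m t) (M t)) := measure_inter_add_diff _ measurableSet_Ioo
    rw [h1, add_zero] at h2
    rw [h2, Real.volume_Ico]
    rw [max_sub_min_eq_abs, abs_sub_comm]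
  calc ∫⁻ t in Ioo (0:ℝ) 1, ENNReal.ofReal |gP t - gQ t|
      = ∫⁻ t in Ioo (0:ℝ) 1, ∫⁻ x in Ioo (0:ℝ) 1, B.indicator 1 (t, x) := by
        refine lintegral_congr (fun t => ?_)
        rw [step1 t]
        have heq : (∫⁻ x in Ioo (0:ℝ) 1, B.indicator 1 (t, x))
            = ∫⁻ x in Ioo (0:ℝ) 1, (Ico (m t) (M t)).indicator 1 x :=
          lintegral_congr (fun x => by
            simp only [Set.indicator_apply, hB, mem_setOf_eq, mem_Ico, Pi.one_apply])
        rw [heq, lintegral_indicator_one measurableSet_Ico,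
          Measure.restrict_apply measurableSet_Ico]
    _ = ∫⁻ x in Ioo (0:ℝ) 1, ∫⁻ t in Ioo (0:ℝ) 1, B.indicator 1 (t, x) := by
        refine lintegral_lintegral_swap ?_
        exact ((measurable_indicator_const_iff 1).mpr hBmeas).aemeasurable
    _ ≤ ∫⁻ x in Ioo (0:ℝ) 1, ENNReal.ofReal |cdf P x - cdf Q x| := by
        refine lintegral_mono (fun x => ?_)
        have hset : {t : ℝ | (t, x) ∈ B} ∩ Ioo (0:ℝ) 1
            ⊆ Ioc (min (cdf P x) (cdf Q x)) (max (cdf P x) (cdf Q x)) := by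
          intro t ⟨htB, htI⟩
          simp only [hB, mem_setOf_eq] at htB
          obtain ⟨h1, h2⟩ := htB
          constructor
          · rw [lt_iff_not_ge, le_min_iff]
            rintro ⟨ha, hb⟩
            rw [← quant_gal hP htI x] at ha
            rw [← quant_gal hQ htI x] at hb
            exact absurd (max_le ha hb) (not_le.mpr h2)
          · rw [le_max_iff]
            rcases min_le_iff.mp h1 with h | h
            · exact Or.inl ((quant_gal hP htI x).mp h)
            · exact Or.inr ((quant_gal hQ htI x).mp h)
        have hms : MeasurableSet {t : ℝ | (t, x) ∈ B} := measurable_prodMk_right hBmeas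
        have heq : (∫⁻ t in Ioo (0:ℝ) 1, B.indicator 1 (t, x))
            = ∫⁻ t in Ioo (0:ℝ) 1, ({t : ℝ | (t, x) ∈ B}).indicator 1 t :=
          lintegral_congr (fun t => by simp only [Set.indicator_apply, mem_setOf_eq, Pi.one_apply])
        rw [heq, lintegral_indicator_one hms, Measure.restrict_apply hms]
        calc volume ({t : ℝ | (t, x) ∈ B} ∩ Ioo 0 1)
            ≤ volume (Ioc (min (cdf P x) (cdf Q x)) (max (cdf P x) (cdf Q x))) :=
              measure_mono hset
          _ = ENNReal.ofReal |cdf P x - cdf Q x| := by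
              rw [Real.volume_Ioc, max_sub_min_eq_abs, abs_sub_comm]

lemma bern_continuous (K i : ℕ) : Continuous (bern K i) := by
  unfold bern; fun_prop

lemma bern_bound (K i : ℕ) {x : ℝ} (hx : x ∈ Icc (0:ℝ) 1) :
    |bern K i x| ≤ (K.choose i : ℝ) := by
  obtain ⟨h0, h1⟩ := hx
  have h2 : 0 ≤ 1 - x := by linarith
  have hb : 0 ≤ bern K i x := by
    unfold bern; positivity
  rw [abs_of_nonneg hb]
  unfold bern
  calc (K.choose i : ℝ) * x ^ i * (1 - x) ^ (K - i)
      ≤ (K.choose i : ℝ) * 1 * 1 := by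
        gcongr <;> [exact pow_le_one₀ h0 h1; exact pow_le_one₀ h2 (by linarith)]
    _ = (K.choose i : ℝ) := by ring

/-- The half-plane set used for layered representation. -/
def HP : Set (ℝ × ℝ) := {p | p.2 < p.1}

section main
variable {P Q : Measure ℝ} [IsProbabilityMeasure P] [IsProbabilityMeasure Q]

lemma integral_fubini_key (hP : P (Set.Icc (0:ℝ) 1)ᶜ = 0)
    {s : ℝ → ℝ} (hs : Measurable s) (hsb : ∀ u, |s u| ≤ 1)
    (hf : ∀ x ∈ Icc (0:ℝ) 1, (∫ u in (0:ℝ)..x, s u)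
        = ∫ u in Ioo (0:ℝ) 1, s u * HP.indicator 1 (x, u)) :
    ∫ x, (∫ u in (0:ℝ)..x, s u) ∂P
      = ∫ u in Ioo (0:ℝ) 1, s u * (1 - cdf P u) := by
  have hae : ∀ᵐ x ∂P, x ∈ Icc (0:ℝ) 1 := by
    rw [ae_iff]
    exact hP
  have hHP : MeasurableSet HP := measurableSet_lt measurable_snd measurable_fst
  set ν := volume.restrict (Ioo (0:ℝ) 1) with hν
  have hνprob : IsProbabilityMeasure ν := ⟨by simp [hν, Real.volume_Ioo]⟩
  have hGmeas : Measurable (fun p : ℝ × ℝ => s p.2 * HP.indicator 1 (p.1, p.2)) := by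
    refine (hs.comp measurable_snd).mul ?_
    have : (fun p : ℝ × ℝ => HP.indicator 1 (p.1, p.2)) = HP.indicator (1 : ℝ × ℝ → ℝ) := by
      funext p; rfl
    rw [this]
    exact Measurable.indicator measurable_const hHP
  have hGint : Integrable (fun p : ℝ × ℝ => s p.2 * HP.indicator 1 (p.1, p.2)) (P.prod ν) := by
    refine Integrable.mono' (integrable_const 1) hGmeas.aestronglyMeasurable ?_
    refine Eventually.of_forall (fun p => ?_)
    rw [norm_mul]
    have h1 : ‖HP.indicator (1 : ℝ × ℝ → ℝ) (p.1, p.2)‖ ≤ 1 := by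
      by_cases h : ((p.1, p.2) : ℝ × ℝ) ∈ HP
      · simp [Set.indicator_of_mem h]
      · simp [Set.indicator_of_notMem h]
    calc ‖s p.2‖ * ‖HP.indicator 1 (p.1, p.2)‖ ≤ 1 * 1 := by
          exact mul_le_mul (hsb p.2) h1 (norm_nonneg _) zero_le_one
      _ = 1 := one_mul 1
  calc ∫ x, (∫ u in (0:ℝ)..x, s u) ∂P
      = ∫ x, (∫ u, s u * HP.indicator 1 (x, u) ∂ν) ∂P := by
        refine integral_congr_ae ?_
        filter_upwards [hae] with x hx
        exact hf x hx
    _ = ∫ u, (∫ x, s u * HP.indicator 1 (x, u) ∂P) ∂ν := by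
        exact integral_integral_swap hGint
    _ = ∫ u in Ioo (0:ℝ) 1, s u * (1 - cdf P u) := by
        refine integral_congr_ae (Eventually.of_forall (fun u => ?_))
        dsimp only
        rw [integral_const_mul]
        congr 1
        have hind : ∀ x : ℝ, HP.indicator 1 (x, u) = (Ioi u).indicator (fun _ => (1:ℝ)) x := by
          intro x
          simp only [Set.indicator_apply, HP, mem_setOf_eq, mem_Ioi, Pi.one_apply]
        simp_rw [hind]
        rw [integral_indicator_const (1:ℝ) measurableSet_Ioi]
        have hIoi : P (Ioi u) = 1 - P (Iic u) := by
          rw [← compl_Iic]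
          rw [measure_compl measurableSet_Iic (measure_ne_top _ _)]
          simp
        rw [measureReal_def, hIoi, ← ofReal_cdf P u]
        have h0 : 0 ≤ cdf P u := cdf_nonneg P u
        have h1 : cdf P u ≤ 1 := cdf_le_one P u
        rw [show (1:ℝ≥0∞) = ENNReal.ofReal 1 by simp, ← ENNReal.ofReal_sub _ h0,
          ENNReal.toReal_ofReal (by linarith)]
        simp
end main

lemma slice_eq {s : ℝ → ℝ} (hsint : ∀ a b : ℝ, IntervalIntegrable s volume a b)
    {x : ℝ} (hx : x ∈ Icc (0:ℝ) 1) :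
    (∫ u in (0:ℝ)..x, s u) = ∫ u in Ioo (0:ℝ) 1, s u * HP.indicator 1 (x, u) := by
  have h1 : (fun u => s u * HP.indicator 1 (x, u)) = fun u => (Iio x).indicator s u := by
    funext u
    by_cases h : u < x
    · simp [Set.indicator_apply, HP, mem_setOf_eq, mem_Iio, h]
    · simp [Set.indicator_apply, HP, mem_setOf_eq, mem_Iio, h]
  rw [h1, setIntegral_indicator measurableSet_Iio]
  have h2 : Ioo (0:ℝ) 1 ∩ Iio x = Ioo 0 x := by
    ext u
    simp only [mem_inter_iff, mem_Ioo, mem_Iio]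
    constructor
    · rintro ⟨⟨a, _⟩, c⟩; exact ⟨a, c⟩
    · rintro ⟨a, b⟩; exact ⟨⟨a, lt_of_lt_of_le b hx.2⟩, b⟩
  rw [h2, ← integral_Ioc_eq_integral_Ioo, intervalIntegral.integral_of_le hx.1]

section main
variable {P Q : Measure ℝ} [IsProbabilityMeasure P] [IsProbabilityMeasure Q]

lemma l1_cdf_bound (K : ℕ) (C lam : ℝ) (hC : 0 < C) (hlam : 0 < lam)
    (happrox : ∀ f : ℝ → ℝ, LipschitzOnWith 1 f (Set.Icc (0:ℝ) 1) →
      ∃ c : Fin (K + 1) → ℝ, (∀ i, c i ∈ Set.Icc (-C) C) ∧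
        ∀ x ∈ Set.Icc (0:ℝ) 1, |f x - ∑ i : Fin (K + 1), c i * bern K i x| ≤ lam)
    (hP : P (Set.Icc (0:ℝ) 1)ᶜ = 0) (hQ : Q (Set.Icc (0:ℝ) 1)ᶜ = 0) :
    ∫ x in Ioo (0:ℝ) 1, |cdf P x - cdf Q x|
      ≤ C * ∑ i : Fin (K + 1), |fq K P i - fq K Q i| + 2 * lam := by
  have haeP : ∀ᵐ x ∂P, x ∈ Icc (0:ℝ) 1 := by rw [ae_iff]; exact hP
  have haeQ : ∀ᵐ x ∂Q, x ∈ Icc (0:ℝ) 1 := by rw [ae_iff]; exact hQ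
  set D : ℝ → ℝ := fun x => cdf P x - cdf Q x with hD
  have hDmeas : Measurable D := ((cdf P).mono.measurable).sub ((cdf Q).mono.measurable)
  set s : ℝ → ℝ := fun x => if 0 ≤ D x then (-1 : ℝ) else 1 with hs
  have hsmeas : Measurable s :=
    Measurable.ite (measurableSet_le measurable_const hDmeas) measurable_const measurable_const
  have hsb : ∀ u, |s u| ≤ 1 := by
    intro u
    simp only [hs]
    split <;> simp
  have hsint : ∀ a b : ℝ, IntervalIntegrable s volume a b := by
    intro a b
    rw [intervalIntegrable_iff]
    refine Measure.integrableOn_of_bounded (M := 1) measure_Ioc_lt_top.ne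
      hsmeas.aestronglyMeasurable ?_
    exact Eventually.of_forall (fun u => by rw [Real.norm_eq_abs]; exact hsb u)
  set f : ℝ → ℝ := fun x => ∫ u in (0:ℝ)..x, s u with hf
  have hLip : LipschitzWith 1 f := by
    refine LipschitzWith.of_dist_le_mul (fun x y => ?_)
    rw [Real.dist_eq, Real.dist_eq]
    have hsum := intervalIntegral.integral_add_adjacent_intervals (hsint 0 y) (hsint y x)
    have hfxy : f x - f y = ∫ u in y..x, s u := by
      simp only [hf]
      linarith
    rw [hfxy]
    have hb := intervalIntegral.norm_integral_le_of_norm_le_const (C := 1) (f := s)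
      (a := y) (b := x) (fun u _ => by rw [Real.norm_eq_abs]; exact hsb u)
    rw [Real.norm_eq_abs] at hb
    calc |∫ u in y..x, s u| ≤ 1 * |x - y| := hb
      _ = 1 * |x - y| := rfl
  obtain ⟨c, hc, hcb⟩ := happrox f (LipschitzWith.lipschitzOnWith hLip)
  set Bf : ℝ → ℝ := fun x => ∑ i : Fin (K + 1), c i * bern K i x with hBf
  have hBcont : Continuous Bf := by
    apply continuous_finset_sum
    exact fun i _ => continuous_const.mul (bern_continuous K i)
  -- f is bounded by 1 on [0,1]
  have hfbound : ∀ x ∈ Icc (0:ℝ) 1, ‖f x‖ ≤ 1 := by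
    intro x hx
    have hb := intervalIntegral.norm_integral_le_of_norm_le_const (C := 1) (f := s)
      (a := 0) (b := x) (fun u _ => by rw [Real.norm_eq_abs]; exact hsb u)
    calc ‖f x‖ ≤ 1 * |x - 0| := hb
      _ ≤ 1 := by rw [sub_zero, one_mul, abs_of_nonneg hx.1]; exact hx.2
  -- integrabilities
  have hfintP : Integrable f P :=
    Integrable.mono' (integrable_const 1) hLip.continuous.aestronglyMeasurable
      (by filter_upwards [haeP] with x hx; exact hfbound x hx)
  have hfintQ : Integrable f Q :=
    Integrable.mono' (integrable_const 1) hLip.continuous.aestronglyMeasurable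
      (by filter_upwards [haeQ] with x hx; exact hfbound x hx)
  have hbernP : ∀ i : Fin (K + 1), Integrable (fun x => c i * bern K (i : ℕ) x) P := by
    intro i
    refine Integrable.const_mul ?_ _
    refine Integrable.mono' (integrable_const (K.choose i : ℝ))
      (bern_continuous K i).aestronglyMeasurable ?_
    filter_upwards [haeP] with x hx
    exact bern_bound K i hx
  have hbernQ : ∀ i : Fin (K + 1), Integrable (fun x => c i * bern K (i : ℕ) x) Q := by
    intro i
    refine Integrable.const_mul ?_ _
    refine Integrable.mono' (integrable_const (K.choose i : ℝ))
      (bern_continuous K i).aestronglyMeasurable ?_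
    filter_upwards [haeQ] with x hx
    exact bern_bound K i hx
  have hBintP : Integrable Bf P := by
    rw [hBf]
    have : (fun x => ∑ i : Fin (K + 1), c i * bern K (i : ℕ) x)
        = ∑ i : Fin (K + 1), (fun x => c i * bern K (i : ℕ) x) := by
      funext x; simp
    exact integrable_finset_sum _ (fun i _ => hbernP i)
  have hBintQ : Integrable Bf Q := integrable_finset_sum _ (fun i _ => hbernQ i)
  -- Fubini identities
  have hfP : ∫ x, f x ∂P = ∫ u in Ioo (0:ℝ) 1, s u * (1 - cdf P u) :=
    integral_fubini_key hP hsmeas hsb (fun x hx => slice_eq hsint hx)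
  have hfQ : ∫ x, f x ∂Q = ∫ u in Ioo (0:ℝ) 1, s u * (1 - cdf Q u) :=
    integral_fubini_key hQ hsmeas hsb (fun x hx => slice_eq hsint hx)
  -- integrability of s * (1 - cdf)
  have hcdf_int : ∀ R : Measure ℝ, Integrable (fun u => s u * (1 - cdf R u))
      (volume.restrict (Ioo (0:ℝ) 1)) := by
    intro R
    refine Measure.integrableOn_of_bounded (M := 2) (by simp [Real.volume_Ioo]) ?_ ?_
    · exact (hsmeas.mul (measurable_const.sub (cdf R).mono.measurable)).aestronglyMeasurable
    · refine Eventually.of_forall (fun u => ?_)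
      rw [Real.norm_eq_abs, abs_mul]
      have h1 : |1 - cdf R u| ≤ 2 := by
        rw [abs_le]
        constructor <;> nlinarith [cdf_nonneg R u, cdf_le_one R u]
      nlinarith [hsb u, abs_nonneg (s u), abs_nonneg (1 - cdf R u)]
  -- the key identity
  have hkey : ∫ x in Ioo (0:ℝ) 1, |D x| = (∫ x, f x ∂P) - ∫ x, f x ∂Q := by
    rw [hfP, hfQ, ← integral_sub (hcdf_int P) (hcdf_int Q)]
    refine integral_congr_ae (Eventually.of_forall (fun u => ?_))
    simp only [hs, hD]
    split
    · rename_i h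
      rw [abs_of_nonneg h]; ring
    · rename_i h
      push_neg at h
      rw [abs_of_neg h]; ring
  -- approximation bounds
  have happP : |(∫ x, f x ∂P) - ∫ x, Bf x ∂P| ≤ lam := by
    rw [← integral_sub hfintP hBintP]
    have hb : ∀ᵐ x ∂P, ‖f x - Bf x‖ ≤ lam := by
      filter_upwards [haeP] with x hx
      rw [Real.norm_eq_abs]
      exact hcb x hx
    have := norm_integral_le_of_norm_le (μ := P) (f := fun x => f x - Bf x)
      (integrable_const lam) hb
    rw [integral_const] at this
    simpa using this
  have happQ : |(∫ x, f x ∂Q) - ∫ x, Bf x ∂Q| ≤ lam := by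
    rw [← integral_sub hfintQ hBintQ]
    have hb : ∀ᵐ x ∂Q, ‖f x - Bf x‖ ≤ lam := by
      filter_upwards [haeQ] with x hx
      rw [Real.norm_eq_abs]
      exact hcb x hx
    have := norm_integral_le_of_norm_le (μ := Q) (f := fun x => f x - Bf x)
      (integrable_const lam) hb
    rw [integral_const] at this
    simpa using this
  -- Bernstein integrals
  have hBP : ∫ x, Bf x ∂P = ∑ i : Fin (K + 1), c i * fq K P i := by
    rw [hBf, integral_finset_sum _ (fun i _ => hbernP i)]
    refine Finset.sum_congr rfl (fun i _ => ?_)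
    rw [integral_const_mul]; rfl
  have hBQ : ∫ x, Bf x ∂Q = ∑ i : Fin (K + 1), c i * fq K Q i := by
    rw [hBf, integral_finset_sum _ (fun i _ => hbernQ i)]
    refine Finset.sum_congr rfl (fun i _ => ?_)
    rw [integral_const_mul]; rfl
  have hsumbound : (∫ x, Bf x ∂P) - (∫ x, Bf x ∂Q)
      ≤ C * ∑ i : Fin (K + 1), |fq K P i - fq K Q i| := by
    rw [hBP, hBQ, ← Finset.sum_sub_distrib, Finset.mul_sum]
    refine Finset.sum_le_sum (fun i _ => ?_)
    rw [← mul_sub]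
    calc c i * (fq K P i - fq K Q i) ≤ |c i * (fq K P i - fq K Q i)| := le_abs_self _
      _ = |c i| * |fq K P i - fq K Q i| := abs_mul _ _
      _ ≤ C * |fq K P i - fq K Q i| := by
          refine mul_le_mul_of_nonneg_right ?_ (abs_nonneg _)
          exact abs_le.mpr ⟨(hc i).1, (hc i).2⟩
  have h1 := abs_le.mp happP
  have h2 := abs_le.mp happQ
  have final : ∫ x in Ioo (0:ℝ) 1, |D x|
      ≤ C * ∑ i : Fin (K + 1), |fq K P i - fq K Q i| + 2 * lam := by
   calc ∫ x in Ioo (0:ℝ) 1, |D x| = (∫ x, f x ∂P) - ∫ x, f x ∂Q := hkey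
    _ = ((∫ x, f x ∂P) - ∫ x, Bf x ∂P) - ((∫ x, f x ∂Q) - ∫ x, Bf x ∂Q)
        + ((∫ x, Bf x ∂P) - ∫ x, Bf x ∂Q) := by ring
    _ ≤ C * ∑ i : Fin (K + 1), |fq K P i - fq K Q i| + 2 * lam := by
        have := hsumbound
        linarith [h1.2, h2.1]
  exact final

end main

/-- if every 1-Lipschitz function on `[0,1]` can be approximated within
`λ` in sup norm by a combination `Σ c_i B_{i,K}` with coefficients in `[−C, C]`, then
for any probability measures `P, Q` on `[0,1]`,
`Tran(P,Q) ≤ C · Σ_i |fq_i(P) − fq_i(Q)| + 2λ`. -/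
theorem stmt6 (K : ℕ) (hK : 1 ≤ K) (C lam : ℝ) (hC : 0 < C) (hlam : 0 < lam)
    (happrox : ∀ f : ℝ → ℝ, LipschitzOnWith 1 f (Set.Icc (0:ℝ) 1) →
      ∃ c : Fin (K + 1) → ℝ, (∀ i, c i ∈ Set.Icc (-C) C) ∧
        ∀ x ∈ Set.Icc (0:ℝ) 1, |f x - ∑ i : Fin (K + 1), c i * bern K i x| ≤ lam)
    (P Q : Measure ℝ) [IsProbabilityMeasure P] [IsProbabilityMeasure Q]
    (hP : P (Set.Icc (0:ℝ) 1)ᶜ = 0) (hQ : Q (Set.Icc (0:ℝ) 1)ᶜ = 0) :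
    tran (fun x y => |x - y|) P Q
      ≤ ENNReal.ofReal (C * ∑ i : Fin (K + 1), |fq K P i - fq K Q i| + 2 * lam) := by
  classical
  set ν := volume.restrict (Ioo (0:ℝ) 1) with hν
  have hmP : Measurable (quant P) := quant_measurable hP
  have hmQ : Measurable (quant Q) := quant_measurable hQ
  have hpair : Measurable (fun t => (quant P t, quant Q t)) := hmP.prodMk hmQ
  set μ₀ : Measure (ℝ × ℝ) := ν.map (fun t => (quant P t, quant Q t)) with hμ₀
  have hfst : μ₀.map Prod.fst = P := by
    rw [hμ₀, Measure.map_map measurable_fst hpair]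
    exact map_quant hP
  have hsnd : μ₀.map Prod.snd = Q := by
    rw [hμ₀, Measure.map_map measurable_snd hpair]
    exact map_quant hQ
  have hcostmeas : Measurable (fun p : ℝ × ℝ => ENNReal.ofReal |p.1 - p.2|) :=
    ((measurable_fst.sub measurable_snd).abs).ennreal_ofReal
  have hineq : tran (fun x y => |x - y|) P Q
      ≤ ∫⁻ p, ENNReal.ofReal |p.1 - p.2| ∂μ₀ := by
    rw [tran]
    exact iInf_le_of_le μ₀ (iInf_le_of_le ⟨hfst, hsnd⟩ le_rfl)
  have hcost : (∫⁻ p, ENNReal.ofReal |p.1 - p.2| ∂μ₀)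
      = ∫⁻ t in Ioo (0:ℝ) 1, ENNReal.ofReal |quant P t - quant Q t| := by
    rw [hμ₀, lintegral_map hcostmeas hpair]
  have habs_int : Integrable (fun x => |cdf P x - cdf Q x|) ν := by
    refine Measure.integrableOn_of_bounded (M := 2) (by simp [Real.volume_Ioo]) ?_ ?_
    · exact (((cdf P).mono.measurable.sub
        (cdf Q).mono.measurable).abs).aestronglyMeasurable
    · refine Filter.Eventually.of_forall (fun x => ?_)
      rw [Real.norm_eq_abs, abs_abs, abs_le]
      constructor <;> nlinarith [cdf_nonneg P x, cdf_le_one P x, cdf_nonneg Q x, cdf_le_one Q x]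
  have hofReal : (∫⁻ x in Ioo (0:ℝ) 1, ENNReal.ofReal |cdf P x - cdf Q x|)
      = ENNReal.ofReal (∫ x in Ioo (0:ℝ) 1, |cdf P x - cdf Q x|) :=
    (ofReal_integral_eq_lintegral_ofReal habs_int
      (Filter.Eventually.of_forall (fun x => abs_nonneg _))).symm
  calc tran (fun x y => |x - y|) P Q
      ≤ ∫⁻ p, ENNReal.ofReal |p.1 - p.2| ∂μ₀ := hineq
    _ = ∫⁻ t in Ioo (0:ℝ) 1, ENNReal.ofReal |quant P t - quant Q t| := hcost
    _ ≤ ∫⁻ x in Ioo (0:ℝ) 1, ENNReal.ofReal |cdf P x - cdf Q x| := cost_bound P Q hP hQ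
    _ = ENNReal.ofReal (∫ x in Ioo (0:ℝ) 1, |cdf P x - cdf Q x|) := hofReal
    _ ≤ ENNReal.ofReal (C * ∑ i : Fin (K + 1), |fq K P i - fq K Q i| + 2 * lam) :=
        ENNReal.ofReal_le_ofReal (l1_cdf_bound K C lam hC hlam happrox hP hQ)

end STMT6AUX
end

section
/- Let θ be an isotropic probability measure on Δ_n whose support is contained in V ∩ Δ_n for some k-dimensional linear subspace V ⊆ ℝ^n. Let ε ∈ (0,1) and C ≥ 5k²/ε, and let H = [−C/n, C/n]^n ⊆ ℝ^n. Then θ(H) ≥ 1 − ε. -/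
open MeasureTheory ENNReal Set

/-- The simplex `Δ_n` of probability vectors in `ℝⁿ`. -/
def simplex (n : ℕ) : Set (Fin n → ℝ) :=
  {x | (∀ i, 0 ≤ x i) ∧ ∑ i, x i = 1}

/-- A mixture `θ` on `Δ_n` is isotropic if `r_j = ∫ x_j dθ ∈ [1/(2n), 2/n]` for all `j`. -/
def Isotropic {n : ℕ} (θ : Measure (Fin n → ℝ)) : Prop :=
  ∀ j : Fin n, (∫ x, x j ∂θ) ∈ Set.Icc (1 / (2 * (n : ℝ))) (2 / (n : ℝ))


lemma maxvol {W : Type*} [AddCommGroup W] [Module ℝ W] [FiniteDimensional ℝ W]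
    {n : ℕ} (hn : 1 ≤ n) (w : Fin n → W) (hspan : ⊤ ≤ Submodule.span ℝ (Set.range w)) :
    ∃ u : Fin (Module.finrank ℝ W) → Fin n,
      ∀ j : Fin n, ∃ c : Fin (Module.finrank ℝ W) → ℝ,
        (∀ i, |c i| ≤ 1) ∧ w j = ∑ i, c i • w (u i) := by
  classical
  set d := Module.finrank ℝ W with hd
  let B : Module.Basis (Fin d) ℝ W := Module.finBasis ℝ W
  have : Nonempty (Fin n) := ⟨⟨0, hn⟩⟩
  -- a maximizer of |det|
  obtain ⟨u, hu⟩ := Finite.exists_max (fun v : Fin d → Fin n => |B.det (w ∘ v)|)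
  -- some subfamily is a basis, so the max is positive
  obtain ⟨b, hb_sub, hb_span, hb_ind⟩ := exists_linearIndependent ℝ (Set.range w)
  have hb_top : ⊤ ≤ Submodule.span ℝ (Set.range ((↑) : b → W)) := by
    rw [Subtype.range_coe, hb_span]; exact hspan
  let Bb : Module.Basis b ℝ W := Module.Basis.mk hb_ind hb_top
  haveI : Fintype b := FiniteDimensional.fintypeBasisIndex Bb
  have hcard : Fintype.card b = d := (Module.finrank_eq_card_basis Bb).symm
  let e : Fin d ≃ b := (Fintype.equivFinOfCardEq hcard).symm
  have hchoice : ∀ i : Fin d, ∃ j : Fin n, w j = (e i : W) := fun i => hb_sub (e i).2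
  let u₀ : Fin d → Fin n := fun i => (hchoice i).choose
  have hu₀ : ∀ i, w (u₀ i) = (e i : W) := fun i => (hchoice i).choose_spec
  have hdet0 : B.det (w ∘ u₀) ≠ 0 := by
    have hwu : (w ∘ u₀) = ⇑(Bb.reindex e.symm) := by
      funext i
      simp only [Function.comp_apply, Module.Basis.reindex_apply, Equiv.symm_symm, hu₀ i]
      rw [Module.Basis.mk_apply]
    rw [hwu]
    exact (B.isUnit_det _).ne_zero
  have hpos : 0 < |B.det (w ∘ u)| := lt_of_lt_of_le (abs_pos.2 hdet0) (hu u₀)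
  set A : Matrix (Fin d) (Fin d) ℝ := B.toMatrix (w ∘ u) with hA
  have hdetA : A.det ≠ 0 := by
    intro h
    rw [Module.Basis.det_apply, ← hA, h, abs_zero] at hpos
    exact lt_irrefl _ hpos
  refine ⟨u, fun j => ?_⟩
  set r : Fin d → ℝ := fun i => B.repr (w j) i with hr
  set c : Fin d → ℝ := (A.det)⁻¹ • A.cramer r with hc
  have hAc : A.mulVec c = r := by
    rw [hc, Matrix.mulVec_smul, Matrix.mulVec_cramer, smul_smul,
      inv_mul_cancel₀ hdetA, one_smul]
  refine ⟨c, ?_, ?_⟩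
  · intro i
    have h1 : c i = (A.det)⁻¹ * (A.updateCol i r).det := by
      rw [hc]; simp [Matrix.cramer_apply]
    have h2 : A.updateCol i r = B.toMatrix (Function.update (w ∘ u) i (w j)) := by
      rw [Module.Basis.toMatrix_update]
    have h3 : |(A.updateCol i r).det| ≤ |A.det| := by
      rw [h2, ← Module.Basis.det_apply, ← Function.comp_update]
      calc |B.det (w ∘ Function.update u i j)| ≤ |B.det (w ∘ u)| := hu _
        _ = |A.det| := by rw [Module.Basis.det_apply]
    calc |c i| = |A.det|⁻¹ * |(A.updateCol i r).det| := by
          rw [h1, abs_mul, abs_inv]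
      _ ≤ |A.det|⁻¹ * |A.det| := by
          apply mul_le_mul_of_nonneg_left h3 (by positivity)
      _ = 1 := inv_mul_cancel₀ (ne_of_gt (lt_of_lt_of_le (abs_pos.2 hdet0) (hu u₀)))
  · apply B.ext_elem
    intro i₀
    have : B.repr (∑ i, c i • w (u i)) i₀ = ∑ i, c i * (A i₀ i) := by
      simp [A, Module.Basis.toMatrix_apply, Finsupp.finset_sum_apply, mul_comm]
    rw [this]
    have : ∑ i, c i * A i₀ i = A.mulVec c i₀ := by
      simp [Matrix.mulVec, dotProduct, mul_comm]
    rw [this, hAc]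

lemma coord_bound (n k : ℕ) (hn : 1 ≤ n) (V : Submodule ℝ (Fin n → ℝ))
    (hV : Module.finrank ℝ V = k) :
    ∃ d : ℕ, d ≤ k ∧ ∃ u : Fin d → Fin n,
      ∀ x ∈ V, (∀ i, 0 ≤ x i) → ∀ j, x j ≤ ∑ i, x (u i) := by
  classical
  let φ : Fin n → Module.Dual ℝ V := fun j => (LinearMap.proj j).comp V.subtype
  let Wsub : Submodule ℝ (Module.Dual ℝ V) := Submodule.span ℝ (Set.range φ)
  let w : Fin n → Wsub := fun j => ⟨φ j, Submodule.subset_span (Set.mem_range_self j)⟩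
  have hspan : ⊤ ≤ Submodule.span ℝ (Set.range w) := by
    have hmap : Submodule.map Wsub.subtype (Submodule.span ℝ (Set.range w))
        = Submodule.map Wsub.subtype ⊤ := by
      rw [Submodule.map_span, Submodule.map_top, Submodule.range_subtype]
      have : Wsub.subtype '' (Set.range w) = Set.range φ := by
        rw [← Set.range_comp]; rfl
      rw [this]
    exact (Submodule.map_injective_of_injective Wsub.injective_subtype hmap).ge
  obtain ⟨u, hu⟩ := maxvol hn w hspan
  refine ⟨Module.finrank ℝ Wsub, ?_, u, ?_⟩
  · calc Module.finrank ℝ Wsub ≤ Module.finrank ℝ (Module.Dual ℝ V) :=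
        Submodule.finrank_le _
      _ = Module.finrank ℝ V := Subspace.dual_finrank_eq
      _ = k := hV
  · intro x hx hpos j
    obtain ⟨c, hc1, hc2⟩ := hu j
    have hval : φ j = ∑ i, c i • φ (u i) := by
      have h := congrArg (Subtype.val) hc2
      simpa [w] using h
    have hxj : x j = ∑ i, c i * x (u i) := by
      have h := congrArg (fun f : Module.Dual ℝ V => f ⟨x, hx⟩) hval
      simpa [φ] using h
    rw [hxj]
    apply Finset.sum_le_sum
    intro i _
    exact mul_le_of_le_one_left (hpos (u i)) ((abs_le.1 (hc1 i)).2)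

/-- for an isotropic mixture `θ` on `Δ_n` supported in `V ∩ Δ_n` for a
`k`-dimensional subspace `V`, and `C ≥ 5k²/ε`, the hypercube `H = [−C/n, C/n]ⁿ`
satisfies `θ(H) ≥ 1 − ε`. -/
theorem stmt12 (n k : ℕ) (hn : 1 ≤ n) (hk : 1 ≤ k) (ε C : ℝ) (hε : ε ∈ Set.Ioo (0:ℝ) 1)
    (hC : C ≥ 5 * k ^ 2 / ε)
    (θ : Measure (Fin n → ℝ)) [IsProbabilityMeasure θ]
    (V : Submodule ℝ (Fin n → ℝ)) (hV : Module.finrank ℝ V = k)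
    (hsupp : θ ((V : Set (Fin n → ℝ)) ∩ simplex n)ᶜ = 0)
    (hiso : Isotropic θ) :
    θ {x | ∀ j, |x j| ≤ C / n} ≥ ENNReal.ofReal (1 - ε) := by
  classical
  obtain ⟨hε0, hε1⟩ := hε
  have hn0 : (0:ℝ) < n := by exact_mod_cast hn
  have hk0 : (0:ℝ) < k := by exact_mod_cast hk
  have hC0 : (0:ℝ) < C := lt_of_lt_of_le (by positivity) hC
  obtain ⟨d, hdk, u, hu⟩ := coord_bound n k hn V hV
  have hae : ∀ᵐ x ∂θ, x ∈ (V : Set (Fin n → ℝ)) ∩ simplex n := by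
    rw [MeasureTheory.ae_iff]
    convert hsupp using 2
    rfl
  have hmeas : ∀ j : Fin n, Measurable fun x : Fin n → ℝ => x j :=
    fun j => measurable_pi_apply j
  have hint : ∀ j, Integrable (fun x => x j) θ := by
    intro j
    refine (integrable_const (1:ℝ)).mono' (hmeas j).aestronglyMeasurable ?_
    filter_upwards [hae] with x hx
    rcases hx with ⟨-, hpos, hsum⟩
    rw [Real.norm_eq_abs, abs_of_nonneg (hpos j)]
    calc x j ≤ ∑ i, x i := Finset.single_le_sum (fun i _ => hpos i) (Finset.mem_univ j)
      _ = 1 := hsum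
  set g : (Fin n → ℝ) → ℝ := fun x => ∑ i, x (u i) with hg
  have hgint : Integrable g θ := by
    apply integrable_finset_sum
    exact fun i _ => hint (u i)
  have hgmean : ∫ x, g x ∂θ ≤ 2 * k / n := by
    rw [hg]
    rw [integral_finset_sum _ (fun i _ => hint (u i))]
    calc ∑ i : Fin d, ∫ x, x (u i) ∂θ ≤ ∑ _i : Fin d, 2 / (n:ℝ) :=
          Finset.sum_le_sum fun i _ => (hiso (u i)).2
      _ = d * (2/(n:ℝ)) := by simp [mul_comm]
      _ ≤ k * (2/(n:ℝ)) := by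
          have : (d:ℝ) ≤ k := by exact_mod_cast hdk
          gcongr
      _ = 2 * k / n := by ring
  have hgnonneg : 0 ≤ᵐ[θ] g := by
    filter_upwards [hae] with x hx
    exact Finset.sum_nonneg fun i _ => hx.2.1 (u i)
  have hmarkov := mul_meas_ge_le_integral_of_nonneg hgnonneg hgint (C/n)
  have htail : (θ {x | C/n ≤ g x}).toReal ≤ ε := by
    have h2 : (C/n) * (θ {x | C/n ≤ g x}).toReal ≤ 2 * k / n := le_trans hmarkov hgmean
    have hT0 : 0 ≤ (θ {x | C/n ≤ g x}).toReal := ENNReal.toReal_nonneg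
    have hεC : 5 * (k:ℝ)^2 ≤ ε * C := by
      rw [ge_iff_le, div_le_iff₀ hε0] at hC
      linarith
    set T := (θ {x | C/n ≤ g x}).toReal with hT
    have h3 : C * T ≤ 2 * k := by
      have h4 := mul_le_mul_of_nonneg_left h2 hn0.le
      have h5 : (n:ℝ) * (C / n * T) = C * T := by field_simp
      have h6 : (n:ℝ) * (2 * k / n) = 2 * k := by field_simp
      rw [h5, h6] at h4
      exact h4
    have hk1 : (1:ℝ) ≤ k := by exact_mod_cast hk
    have h7 : 2 * (k:ℝ) ≤ ε * C := by nlinarith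
    have h8 : T ≤ 2 * k / C := (le_div_iff₀ hC0).2 (by linarith)
    have h9 : 2 * (k:ℝ) / C ≤ ε := (div_le_iff₀ hC0).2 (by linarith)
    linarith
  have htail' : θ {x | C/n ≤ g x} ≤ ENNReal.ofReal ε := by
    rw [← ENNReal.ofReal_toReal (measure_ne_top θ _)]
    exact ENNReal.ofReal_le_ofReal htail
  set good := {x : Fin n → ℝ | ∀ j, |x j| ≤ C / n} with hgood
  have hsub : goodᶜ ⊆ {x | C/n ≤ g x} ∪ ((V : Set (Fin n → ℝ)) ∩ simplex n)ᶜ := by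
    intro x hx
    by_cases hxV : x ∈ (V : Set (Fin n → ℝ)) ∩ simplex n
    · left
      simp only [hgood, mem_compl_iff, mem_setOf_eq, not_forall, not_le] at hx
      obtain ⟨j, hj⟩ := hx
      have hxj : x j ≤ g x := hu x hxV.1 hxV.2.1 j
      have : |x j| = x j := abs_of_nonneg (hxV.2.1 j)
      simp only [mem_setOf_eq]
      linarith [this ▸ hj]
    · right; exact hxV
  have hbad : θ goodᶜ ≤ ENNReal.ofReal ε := by
    calc θ goodᶜ ≤ θ ({x | C/n ≤ g x} ∪ ((V : Set (Fin n → ℝ)) ∩ simplex n)ᶜ) :=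
          measure_mono hsub
      _ ≤ θ {x | C/n ≤ g x} + θ (((V : Set (Fin n → ℝ)) ∩ simplex n)ᶜ) := measure_union_le _ _
      _ = θ {x | C/n ≤ g x} := by rw [hsupp, add_zero]
      _ ≤ ENNReal.ofReal ε := htail'
  rw [ge_iff_le, ENNReal.ofReal_sub _ hε0.le, ENNReal.ofReal_one]
  rw [tsub_le_iff_right]
  calc (1:ℝ≥0∞) = θ univ := (measure_univ).symm
    _ = θ (good ∪ goodᶜ) := by rw [union_compl_self]
    _ ≤ θ good + θ goodᶜ := measure_union_le _ _
    _ ≤ θ good + ENNReal.ofReal ε := by gcongr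
end

section
/- Let V ⊆ ℝ^n be a linear subspace and L > 0 be such that ‖v‖₂ ≤ L·‖v‖₁ for every v ∈ V. Let Q ⊆ V be a nonempty closed convex set and let Π_Q : ℝ^n → Q be the Euclidean nearest-point projection onto Q. Then for any probability measures μ, ν supported on V, Tran₁(Π_Q#μ, Π_Q#ν) ≤ √n · L · Tran₁(μ, ν). -/
open MeasureTheory ENNReal Set

/-- The `L1` transportation distance on `ℝⁿ` (Euclidean space), i.e. the Wasserstein-1
distance with respect to the metric `d(x,y) = Σ_i |x_i − y_i|`. -/
noncomputable def tran1 {n : ℕ} (P Q : Measure (EuclideanSpace ℝ (Fin n))) : ℝ≥0∞ :=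
  tran (fun x y => ∑ i, |x i - y i|) P Q

lemma proj_contract {E : Type*} [NormedAddCommGroup E] [InnerProductSpace ℝ E]
    (Q : Set E) (hQconvex : Convex ℝ Q)
    (π : E → E) (hπ : ∀ x, π x ∈ Q ∧ ∀ y ∈ Q, dist x (π x) ≤ dist x y)
    (x y : E) : ‖π x - π y‖ ≤ ‖x - y‖ := by
  have key : ∀ z, ∀ w ∈ Q, (inner ℝ (z - π z) (w - π z) : ℝ) ≤ 0 := by
    intro z w hw
    have heq : ‖z - π z‖ = ⨅ w : Q, ‖z - w‖ := by
      haveI : Nonempty Q := ⟨⟨π z, (hπ z).1⟩⟩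
      apply le_antisymm
      · exact le_ciInf fun w => by
          simpa [dist_eq_norm] using (hπ z).2 w w.2
      · have hb : BddBelow (Set.range fun w : Q => ‖z - (w : E)‖) := by
          refine ⟨0, ?_⟩
          rintro r ⟨w, rfl⟩
          exact norm_nonneg _
        exact ciInf_le hb ⟨π z, (hπ z).1⟩
    exact (norm_eq_iInf_iff_real_inner_le_zero hQconvex (hπ z).1).1 heq w hw
  have h1 := key x (π y) (hπ y).1
  have h2 := key y (π x) (hπ x).1
  have hsq : ‖π x - π y‖ ^ 2 ≤ (inner ℝ (x - y) (π x - π y) : ℝ) := by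
    have e1 : (inner ℝ (x - π x) (π y - π x) : ℝ)
        = (inner ℝ x (π y) : ℝ) - (inner ℝ x (π x) : ℝ) - (inner ℝ (π x) (π y) : ℝ) + ‖π x‖^2 := by
      simp [inner_sub_left, inner_sub_right, real_inner_self_eq_norm_sq, real_inner_comm (π x)]
      ring
    have e2 : (inner ℝ (y - π y) (π x - π y) : ℝ)
        = (inner ℝ y (π x) : ℝ) - (inner ℝ y (π y) : ℝ) - (inner ℝ (π x) (π y) : ℝ) + ‖π y‖^2 := by
      simp [inner_sub_left, inner_sub_right, real_inner_self_eq_norm_sq, real_inner_comm (π y)]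
      ring
    have e3 : ‖π x - π y‖^2 = ‖π x‖^2 - 2 * (inner ℝ (π x) (π y) : ℝ) + ‖π y‖^2 :=
      norm_sub_sq_real _ _
    have e4 : (inner ℝ (x - y) (π x - π y) : ℝ)
        = (inner ℝ x (π x) : ℝ) - (inner ℝ x (π y) : ℝ) - (inner ℝ y (π x) : ℝ) + (inner ℝ y (π y) : ℝ) := by
      simp [inner_sub_left, inner_sub_right]; ring
    rw [e1] at h1; rw [e2] at h2; rw [e3, e4]; linarith
  have hcs : (inner ℝ (x - y) (π x - π y) : ℝ) ≤ ‖x - y‖ * ‖π x - π y‖ := real_inner_le_norm _ _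
  rcases eq_or_lt_of_le (norm_nonneg (π x - π y)) with h0 | h0
  · rw [← h0]; exact norm_nonneg _
  · nlinarith

lemma l1_le_sqrt_mul_l2 {n : ℕ} (v : EuclideanSpace ℝ (Fin n)) :
    ∑ i, |v i| ≤ Real.sqrt n * ‖v‖ := by
  have h1 : (∑ i, |v i|) ^ 2 ≤ (n : ℝ) * ∑ i, |v i| ^ 2 := by
    simpa using sq_sum_le_card_mul_sum_sq (s := Finset.univ) (f := fun i => |v i|)
  have h2 : ‖v‖ ^ 2 = ∑ i, |v i| ^ 2 := by
    rw [EuclideanSpace.norm_eq]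
    rw [Real.sq_sqrt (Finset.sum_nonneg fun i _ => sq_nonneg _)]
    simp [sq_abs]
  have h3 : ∑ i, |v i| ≤ Real.sqrt ((n : ℝ) * ‖v‖ ^ 2) := by
    rw [← Real.sqrt_sq (Finset.sum_nonneg fun i _ => abs_nonneg _)]
    exact Real.sqrt_le_sqrt (by rw [h2]; exact h1)
  calc ∑ i, |v i| ≤ Real.sqrt ((n : ℝ) * ‖v‖ ^ 2) := h3
    _ = Real.sqrt n * ‖v‖ := by
        rw [Real.sqrt_mul (Nat.cast_nonneg n), Real.sqrt_sq (norm_nonneg _)]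

/-- let `V ⊆ ℝⁿ` be a subspace with `‖v‖₂ ≤ L‖v‖₁` on `V`, let `Q ⊆ V` be
nonempty closed convex, and let `π` be the Euclidean nearest-point projection onto `Q`.
Then for probability measures `μ, ν` supported on `V`,
`Tran₁(π#μ, π#ν) ≤ √n · L · Tran₁(μ, ν)`. -/
theorem stmt15 (n : ℕ) (hn : 1 ≤ n) (V : Submodule ℝ (EuclideanSpace ℝ (Fin n)))
    (L : ℝ) (hL : 0 < L)
    (hV : ∀ v ∈ V, ‖v‖ ≤ L * ∑ i, |v i|)
    (Q : Set (EuclideanSpace ℝ (Fin n))) (hQV : Q ⊆ (V : Set (EuclideanSpace ℝ (Fin n))))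
    (hQne : Q.Nonempty) (hQclosed : IsClosed Q) (hQconvex : Convex ℝ Q)
    (π : EuclideanSpace ℝ (Fin n) → EuclideanSpace ℝ (Fin n))
    (hπ : ∀ x, π x ∈ Q ∧ ∀ y ∈ Q, dist x (π x) ≤ dist x y)
    (μ ν : Measure (EuclideanSpace ℝ (Fin n)))
    [IsProbabilityMeasure μ] [IsProbabilityMeasure ν]
    (hμ : μ ((V : Set (EuclideanSpace ℝ (Fin n))))ᶜ = 0)
    (hν : ν ((V : Set (EuclideanSpace ℝ (Fin n))))ᶜ = 0) :
    tran1 (μ.map π) (ν.map π) ≤ ENNReal.ofReal (Real.sqrt n * L) * tran1 μ ν := by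
  have hπlip : LipschitzWith 1 π := by
    refine LipschitzWith.of_dist_le_mul fun x y => ?_
    rw [dist_eq_norm, dist_eq_norm, NNReal.coe_one, one_mul]
    exact proj_contract Q hQconvex π hπ x y
  have hπm : Measurable π := hπlip.continuous.measurable
  have hVmeas : MeasurableSet (V : Set (EuclideanSpace ℝ (Fin n))) :=
    V.closed_of_finiteDimensional.measurableSet
  set c : ℝ := Real.sqrt n * L with hc
  have hcpos : 0 < c := by
    apply mul_pos _ hL
    exact Real.sqrt_pos.2 (by exact_mod_cast Nat.pos_of_ne_zero (by omega))
  have hcost_meas : Measurable fun p : (EuclideanSpace ℝ (Fin n)) × (EuclideanSpace ℝ (Fin n)) => ENNReal.ofReal (∑ i, |p.1 i - p.2 i|) := by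
    apply ENNReal.measurable_ofReal.comp
    apply Finset.measurable_sum
    intro i _
    apply Continuous.measurable
    fun_prop
  have expand : ENNReal.ofReal c * tran1 μ ν
      = ⨅ (γ : Measure ((EuclideanSpace ℝ (Fin n)) × (EuclideanSpace ℝ (Fin n))))
          (_ : γ.map Prod.fst = μ ∧ γ.map Prod.snd = ν),
          ENNReal.ofReal c * ∫⁻ p, ENNReal.ofReal (∑ i, |p.1 i - p.2 i|) ∂γ := by
    rw [tran1, tran, ENNReal.mul_iInf_of_ne (by positivity) ofReal_ne_top]
    congr 1
    ext γ
    rw [ENNReal.mul_iInf_of_ne (by positivity) ofReal_ne_top]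
  rw [expand]
  refine le_iInf fun γ => le_iInf fun hγ => ?_
  obtain ⟨hγ1, hγ2⟩ := hγ
  set T : (EuclideanSpace ℝ (Fin n)) × (EuclideanSpace ℝ (Fin n)) → _ := Prod.map π π with hT
  have hTm : Measurable T := hπm.prodMap hπm
  -- the mapped coupling is a coupling of the pushforwards
  have hm1 : (γ.map T).map Prod.fst = μ.map π := by
    rw [Measure.map_map measurable_fst hTm]
    have : (Prod.fst ∘ T) = π ∘ Prod.fst := rfl
    rw [this, ← Measure.map_map hπm measurable_fst, hγ1]
  have hm2 : (γ.map T).map Prod.snd = ν.map π := by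
    rw [Measure.map_map measurable_snd hTm]
    have : (Prod.snd ∘ T) = π ∘ Prod.snd := rfl
    rw [this, ← Measure.map_map hπm measurable_snd, hγ2]
  have hle : tran1 (μ.map π) (ν.map π)
      ≤ ∫⁻ p, ENNReal.ofReal (∑ i, |p.1 i - p.2 i|) ∂(γ.map T) := by
    rw [tran1, tran]
    exact iInf₂_le (γ.map T) ⟨hm1, hm2⟩
  refine hle.trans ?_
  rw [lintegral_map hcost_meas hTm]
  -- a.e. membership in V
  have hae : ∀ᵐ p ∂γ, p.1 ∈ (V : Set (EuclideanSpace ℝ (Fin n))) ∧ p.2 ∈ (V : Set (EuclideanSpace ℝ (Fin n))) := by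
    have h1 : γ (Prod.fst ⁻¹' (V : Set (EuclideanSpace ℝ (Fin n)))ᶜ) = 0 := by
      rw [← Measure.map_apply measurable_fst hVmeas.compl, hγ1]; exact hμ
    have h2 : γ (Prod.snd ⁻¹' (V : Set (EuclideanSpace ℝ (Fin n)))ᶜ) = 0 := by
      rw [← Measure.map_apply measurable_snd hVmeas.compl, hγ2]; exact hν
    have h1' : ∀ᵐ p ∂γ, p.1 ∈ (V : Set (EuclideanSpace ℝ (Fin n))) := by
      rw [ae_iff]
      convert h1 using 2
      rfl
    have h2' : ∀ᵐ p ∂γ, p.2 ∈ (V : Set (EuclideanSpace ℝ (Fin n))) := by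
      rw [ae_iff]
      convert h2 using 2
      rfl
    exact h1'.and h2'
  have hbound : ∫⁻ p, ENNReal.ofReal (∑ i, |π p.1 i - π p.2 i|) ∂γ
      ≤ ∫⁻ p, ENNReal.ofReal c * ENNReal.ofReal (∑ i, |p.1 i - p.2 i|) ∂γ := by
    refine lintegral_mono_ae (hae.mono fun p hp => ?_)
    rw [← ENNReal.ofReal_mul hcpos.le]
    apply ENNReal.ofReal_le_ofReal
    have step1 : ∑ i, |π p.1 i - π p.2 i| ≤ Real.sqrt n * ‖π p.1 - π p.2‖ := by
      have := l1_le_sqrt_mul_l2 (π p.1 - π p.2)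
      simpa using this
    have step2 : ‖π p.1 - π p.2‖ ≤ ‖p.1 - p.2‖ := proj_contract Q hQconvex π hπ _ _
    have step3 : ‖p.1 - p.2‖ ≤ L * ∑ i, |p.1 i - p.2 i| := by
      have hmem : p.1 - p.2 ∈ V := V.sub_mem hp.1 hp.2
      have := hV _ hmem
      simpa using this
    have hs : (0:ℝ) ≤ Real.sqrt n := Real.sqrt_nonneg _
    calc ∑ i, |π p.1 i - π p.2 i| ≤ Real.sqrt n * ‖π p.1 - π p.2‖ := step1
      _ ≤ Real.sqrt n * ‖p.1 - p.2‖ := by nlinarith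
      _ ≤ Real.sqrt n * (L * ∑ i, |p.1 i - p.2 i|) := by nlinarith
      _ = c * ∑ i, |p.1 i - p.2 i| := by rw [hc]; ring
  refine hbound.trans ?_
  rw [lintegral_const_mul' _ _ ofReal_ne_top]
end
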